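/- Let K be a closed subset of [0,1]. A random vector (X₁,…,X_d) of real random variables on Ω is K-concentrated if and only if it is 𝒱(K)-comonotonic. -/

import Mathlib

open MeasureTheory Filter Set

section Defs

variable {Ω : Type*} [MeasurableSpace Ω]

/-- An atomless probability space: every event can be split to achieve any smaller measure
(Sierpiński's property, equivalent to atomlessness for probability measures). -/
def Atomless (P : Measure Ω) : Prop :=
  ∀ A : Set Ω, MeasurableSet A → ∀ r : ENNReal, r ≤ P A →
    ∃ B : Set Ω, B ⊆ A ∧ MeasurableSet B ∧ P B = r

/-- `A` is a tail event for `X`: outside a null set, `X ω ≥ X ω'` for `ω ∈ A`, `ω' ∈ Aᶜ`. -/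
def IsTailEvent (P : Measure Ω) (X : Ω → ℝ) (A : Set Ω) : Prop :=
  MeasurableSet A ∧ ∃ N : Set Ω, P N = 0 ∧
    ∀ ω ∈ A, ω ∉ N → ∀ ω' ∈ Aᶜ, ω' ∉ N → X ω' ≤ X ω

/-- `A` is a `p`-tail event for `X`: a tail event with `P A = 1 - p`. -/
def IsPTailEvent (P : Measure Ω) (X : Ω → ℝ) (p : ℝ) (A : Set Ω) : Prop :=
  IsTailEvent P X A ∧ P A = ENNReal.ofReal (1 - p)

/-- A random vector is `p`-concentrated if a single event is a `p`-tail event for every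
component. -/
def PConcentrated (P : Measure Ω) {d : ℕ} (X : Fin d → Ω → ℝ) (p : ℝ) : Prop :=
  ∃ A : Set Ω, ∀ i, IsPTailEvent P (X i) p A

/-- A random vector is `K`-concentrated if it is `p`-concentrated for every `p ∈ K`. -/
def KConcentrated (P : Measure Ω) {d : ℕ} (X : Fin d → Ω → ℝ) (K : Set ℝ) : Prop :=
  ∀ p ∈ K, PConcentrated P X p

/-- Left quantile function `Q_X⁻(p) = inf {x | ℙ(X ≤ x) ≥ p}` (also `VaR_p`). -/
noncomputable def leftQuantile (P : Measure Ω) (X : Ω → ℝ) (p : ℝ) : ℝ :=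
  sInf {x : ℝ | ENNReal.ofReal p ≤ P {ω | X ω ≤ x}}

/-- Right quantile function `Q_X⁺(p) = inf {x | ℙ(X ≤ x) > p}` (also `VaR⁺_p`). -/
noncomputable def rightQuantile (P : Measure Ω) (X : Ω → ℝ) (p : ℝ) : ℝ :=
  sInf {x : ℝ | ENNReal.ofReal p < P {ω | X ω ≤ x}}

/-- `Q_X : [0,1] → ℝ`, equal to `Q_X⁺` at `0` and to `Q_X⁻` on `(0,1]`. -/
noncomputable def Q (P : Measure Ω) (X : Ω → ℝ) (p : ℝ) : ℝ :=
  if p = 0 then rightQuantile P X 0 else leftQuantile P X p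

/-- Membership in L∞: essentially bounded (and measurable) random variables. -/
def MemLinf (P : Measure Ω) (X : Ω → ℝ) : Prop :=
  Measurable X ∧ ∃ C : ℝ, ∀ᵐ ω ∂P, |X ω| ≤ C

/-- A functional `ρ` on L∞ is `K`-additive if it is additive on every `K`-concentrated
random vector (of dimension `d ≥ 2`) with essentially bounded components. -/
def KAdditive (P : Measure Ω) (K : Set ℝ) (ρ : (Ω → ℝ) → ℝ) : Prop :=
  ∀ d : ℕ, 2 ≤ d → ∀ X : Fin d → Ω → ℝ, (∀ i, MemLinf P (X i)) →
    KConcentrated P X K → ρ (∑ i, X i) = ∑ i, ρ (X i)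

/-- A pair of random variables is comonotonic. -/
def ComonotonePair (P : Measure Ω) (X Z : Ω → ℝ) : Prop :=
  ∀ᵐ w ∂(P.prod P), 0 ≤ (X w.1 - X w.2) * (Z w.1 - Z w.2)

/-- A random vector is `g`-comonotonic: some random variable `Z` with quantile function `g`
on `[0,1]` is comonotonic with every component. -/
def GComonotone (P : Measure Ω) {d : ℕ} (g : ℝ → ℝ) (X : Fin d → Ω → ℝ) : Prop :=
  ∃ Z : Ω → ℝ, Measurable Z ∧ (∀ p ∈ Icc (0:ℝ) 1, Q P Z p = g p) ∧
    ∀ i, ComonotonePair P (X i) Z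

/-- A functional `ρ` on L∞ is `g`-additive if it is additive on every `g`-comonotonic
random vector (of dimension `d ≥ 2`) with essentially bounded components. -/
def GAdditive (P : Measure Ω) (g : ℝ → ℝ) (ρ : (Ω → ℝ) → ℝ) : Prop :=
  ∀ d : ℕ, 2 ≤ d → ∀ X : Fin d → Ω → ℝ, (∀ i, MemLinf P (X i)) →
    GComonotone P g X → ρ (∑ i, X i) = ∑ i, ρ (X i)

/-- The distortion riskmetric `I_h`. -/
noncomputable def distortionRM (P : Measure Ω) (h : ℝ → ℝ) (X : Ω → ℝ) : ℝ :=
  (∫ x in Iio (0:ℝ), (h ((P {ω | x < X ω}).toReal) - h 1)) +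
    ∫ x in Ioi (0:ℝ), h ((P {ω | x < X ω}).toReal)

/-- The spectral risk measure `ρ_g(X) = ∫₀¹ g(t) Q_X(t) dt`. -/
noncomputable def specRM (P : Measure Ω) (g : ℝ → ℝ) (X : Ω → ℝ) : ℝ :=
  ∫ t in (0:ℝ)..1, g t * Q P X t

/-- Expected Shortfall at level `p`. -/
noncomputable def ES (P : Measure Ω) (p : ℝ) (X : Ω → ℝ) : ℝ :=
  (1 - p)⁻¹ * ∫ q in p..1, leftQuantile P X q

end Defs

/-- The class 𝒢 of increasing functions on `[0,1]`, right-continuous at `0` and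
left-continuous on `(0,1]`. -/
def MemG (g : ℝ → ℝ) : Prop :=
  MonotoneOn g (Icc 0 1) ∧
    Tendsto g (nhdsWithin 0 (Ioi 0)) (nhds (g 0)) ∧
    ∀ p ∈ Ioc (0:ℝ) 1, Tendsto g (nhdsWithin p (Iio p)) (nhds (g p))

/-- `p` is a point of strict increase on the right of `g`. -/
def IsPSIR (g : ℝ → ℝ) (p : ℝ) : Prop :=
  p ∈ Ico (0:ℝ) 1 ∧ ∀ s ∈ Ioc p 1, g p < g s

/-- `p` is a point of strict increase on the left of `g`. -/
def IsPSIL (g : ℝ → ℝ) (p : ℝ) : Prop :=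
  p ∈ Ioc (0:ℝ) 1 ∧ ∀ s ∈ Ico (0:ℝ) p, g s < g p

/-- The set of points of strict increase of `g`. -/
def PSI (g : ℝ → ℝ) : Set ℝ :=
  {p | IsPSIR g p ∨ IsPSIL g p}

/-- `f ≾ g`: there is an increasing `h` with `f = h ∘ g` a.e. on `[0,1]`. -/
def Prec (f g : ℝ → ℝ) : Prop :=
  ∃ h : ℝ → ℝ, Monotone h ∧
    ∀ᵐ t ∂(volume.restrict (Icc (0:ℝ) 1)), f t = h (g t)

/-- The map `𝒱 : K ↦ (p ↦ sup ((0,p) ∩ K))` (with `sup ∅ = 0`, the junk value of `sSup` in `ℝ`). -/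
noncomputable def VK (K : Set ℝ) (p : ℝ) : ℝ :=
  sSup (Ioo (0:ℝ) p ∩ K)

/-- A risk spectrum: a nonnegative element of 𝒢 integrating to 1. -/
def IsRiskSpectrum (g : ℝ → ℝ) : Prop :=
  MemG g ∧ (∀ t ∈ Icc (0:ℝ) 1, 0 ≤ g t) ∧ (∫ t in (0:ℝ)..1, g t) = 1
section Helpers

open MeasureTheory Filter Set

set_option linter.unusedSectionVars false

variable {Ω : Type*} [MeasurableSpace Ω] {P : MeasureTheory.Measure Ω}
  [MeasureTheory.IsProbabilityMeasure P]

lemma tail_univ (Y : Ω → ℝ) : IsTailEvent P Y univ :=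
  ⟨MeasurableSet.univ, ∅, measure_empty, by simp⟩

lemma tail_empty (Y : Ω → ℝ) : IsTailEvent P Y ∅ :=
  ⟨MeasurableSet.empty, ∅, measure_empty, by simp⟩

lemma tail_compl_neg {Y : Ω → ℝ} {A : Set Ω} (h : IsTailEvent P Y A) :
    IsTailEvent P (fun ω => - Y ω) Aᶜ := by
  obtain ⟨hm, N, hN, hT⟩ := h
  refine ⟨hm.compl, N, hN, ?_⟩
  intro ω hω hωN ω' hω' hω'N
  simp only [compl_compl] at hω'
  simpa using hT ω' hω' hω'N ω hω hωN

lemma tail_null_mod {Y : Ω → ℝ} {A B : Set Ω} (h : IsTailEvent P Y A)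
    (hBm : MeasurableSet B) (hnull : P (A \ B) = 0) (hBA : B ⊆ A) :
    IsTailEvent P Y B := by
  obtain ⟨hm, N, hN, hT⟩ := h
  refine ⟨hBm, N ∪ (A \ B), measure_union_null hN hnull, ?_⟩
  intro ω hω hωN ω' hω' hω'N
  simp only [mem_union, not_or] at hωN hω'N
  have hω'A : ω' ∈ Aᶜ := by
    intro hA
    exact hω'N.2 ⟨hA, hω'⟩
  exact hT ω (hBA hω) hωN.1 ω' hω'A hω'N.1

variable {d : ℕ} {X : Fin d → Ω → ℝ}

/-- Surgery lemma: shrink a tail event `A` into `Al`, preserving measure. -/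
lemma tail_shrink (hP : Atomless P) {A Al : Set Ω}
    (hAm : MeasurableSet A) (hAlm : MeasurableSet Al)
    (tA : ∀ i, IsTailEvent P (X i) A) (tAl : ∀ i, IsTailEvent P (X i) Al)
    {e : ENNReal} (he1 : P A = e) (he2 : e ≤ P Al) :
    ∃ B : Set Ω, MeasurableSet B ∧ (∀ i, IsTailEvent P (X i) B) ∧ P B = e ∧
      A ∩ Al ⊆ B ∧ B ⊆ Al := by
  by_cases hnull : P (A \ Al) = 0
  · refine ⟨A ∩ Al, hAm.inter hAlm, fun i => tail_null_mod (tA i) (hAm.inter hAlm) ?_ inter_subset_left,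
      ?_, subset_rfl, inter_subset_right⟩
    · rw [Set.diff_self_inter]; exact hnull
    · have hsplit : P (A ∩ Al) + P (A \ Al) = P A :=
        measure_inter_add_diff A hAlm
      rw [hnull, add_zero] at hsplit
      rw [hsplit, he1]
  · -- positive case: X i is a.e. constant on Al \ A; fill with arbitrary chunk
    -- pick ω* in (A \ Al) outside all the null sets
    have hNbig : ∃ Nb : Set Ω, P Nb = 0 ∧
        (∀ i, ∀ ω ∈ A, ω ∉ Nb → ∀ ω' ∈ Aᶜ, ω' ∉ Nb → X i ω' ≤ X i ω) ∧
        (∀ i, ∀ ω ∈ Al, ω ∉ Nb → ∀ ω' ∈ Alᶜ, ω' ∉ Nb → X i ω' ≤ X i ω) := by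
      choose NA hNA0 hNA using fun i => (tA i).2
      choose NL hNL0 hNL using fun i => (tAl i).2
      refine ⟨(⋃ i, NA i) ∪ (⋃ i, NL i),
        measure_union_null (measure_iUnion_null hNA0) (measure_iUnion_null hNL0), ?_, ?_⟩
      · intro i ω hω hωN ω' hω' hω'N
        simp only [mem_union, mem_iUnion, not_or, not_exists] at hωN hω'N
        exact hNA i ω hω (hωN.1 i) ω' hω' (hω'N.1 i)
      · intro i ω hω hωN ω' hω' hω'N
        simp only [mem_union, mem_iUnion, not_or, not_exists] at hωN hω'N
        exact hNL i ω hω (hωN.2 i) ω' hω' (hω'N.2 i)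
    obtain ⟨Nb, hNb0, hNbA, hNbL⟩ := hNbig
    have hdiffpos : P ((A \ Al) \ Nb) ≠ 0 := by
      rwa [measure_diff_null hNb0]
    obtain ⟨ωs, hωs⟩ := nonempty_of_measure_ne_zero hdiffpos
    have hωsA : ωs ∈ A := hωs.1.1
    have hωsAl : ωs ∉ Al := hωs.1.2
    have hωsN : ωs ∉ Nb := hωs.2
    -- the constant value
    have hconst : ∀ i, ∀ η ∈ Al \ A, η ∉ Nb → X i η = X i ωs := by
      intro i η hη hηN
      refine le_antisymm (hNbA i ωs hωsA hωsN η hη.2 hηN) (hNbL i η hη.1 hηN ωs hωsAl hωsN)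
    -- choose the chunk
    have hr : e - P (A ∩ Al) ≤ P (Al \ A) := by
      rw [tsub_le_iff_right]
      calc e ≤ P Al := he2
        _ = P (Al \ A) + P (Al ∩ A) := (measure_diff_add_inter Al hAm).symm
        _ = P (Al \ A) + P (A ∩ Al) := by rw [inter_comm]
    obtain ⟨B₀, hB₀sub, hB₀m, hB₀e⟩ := hP (Al \ A) (hAlm.diff hAm) _ hr
    have hInterLe : P (A ∩ Al) ≤ e := he1 ▸ measure_mono inter_subset_left
    refine ⟨(A ∩ Al) ∪ B₀, (hAm.inter hAlm).union hB₀m, ?_, ?_, subset_union_left,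
      union_subset inter_subset_right (hB₀sub.trans diff_subset)⟩
    · -- tail property
      intro i
      refine ⟨(hAm.inter hAlm).union hB₀m, Nb, hNb0, ?_⟩
      intro ω hω hωN ω' hω' hω'N
      rcases hω with hω | hω
      · by_cases hω'A : ω' ∈ A
        · -- then ω' ∉ Al
          have hω'Al : ω' ∉ Al := fun h => hω' (Or.inl ⟨hω'A, h⟩)
          exact hNbL i ω hω.2 hωN ω' hω'Al hω'N
        · exact hNbA i ω hω.1 hωN ω' hω'A hω'N
      · -- ω ∈ B₀ ⊆ Al \ A
        have hωd := hB₀sub hω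
        have hωc : X i ω = X i ωs := hconst i ω hωd hωN
        by_cases hω'Al : ω' ∈ Al
        · have hω'A : ω' ∉ A := fun h => hω' (Or.inl ⟨h, hω'Al⟩)
          have : X i ω' = X i ωs := hconst i ω' ⟨hω'Al, hω'A⟩ hω'N
          rw [this, hωc]
        · exact hNbL i ω hωd.1 hωN ω' hω'Al hω'N
    · -- measure
      have hdisj : Disjoint (A ∩ Al) B₀ := by
        refine Set.disjoint_left.2 fun ω hω hωB => ?_
        exact (hB₀sub hωB).2 hω.1
      rw [measure_union hdisj hB₀m, hB₀e, add_tsub_cancel_of_le hInterLe]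

end Helpers
section Helpers2

open MeasureTheory Filter Set

set_option linter.unusedSectionVars false

variable {Ω : Type*} [MeasurableSpace Ω] {P : MeasureTheory.Measure Ω}
  [MeasureTheory.IsProbabilityMeasure P] {d : ℕ} {X : Fin d → Ω → ℝ}

/-- Insertion lemma: given a fresh tail event of measure `e` and a pair `Ar ⊆ Al`
of tail events with `P Ar ≤ e ≤ P Al`, there is a tail event of measure `e`
squeezed between `Ar` and `Al`. -/
lemma tail_ins (hP : Atomless P) {A Al Ar : Set Ω}
    (hAm : MeasurableSet A) (hAlm : MeasurableSet Al) (hArm : MeasurableSet Ar)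
    (tA : ∀ i, IsTailEvent P (X i) A) (tAl : ∀ i, IsTailEvent P (X i) Al)
    (tAr : ∀ i, IsTailEvent P (X i) Ar) (hsub : Ar ⊆ Al)
    {e : ENNReal} (he1 : P A = e) (her : P Ar ≤ e) (hel : e ≤ P Al) :
    ∃ B : Set Ω, MeasurableSet B ∧ (∀ i, IsTailEvent P (X i) B) ∧ P B = e ∧
      Ar ⊆ B ∧ B ⊆ Al := by
  have he_le_one : e ≤ 1 := by
    calc e ≤ P Al := hel
      _ ≤ 1 := prob_le_one
  obtain ⟨B₁, hB₁m, tB₁, hB₁e, hB₁l, hB₁r⟩ := tail_shrink hP hAm hAlm tA tAl he1 hel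
  -- second step on complements with negated components
  have tB₁c : ∀ i, IsTailEvent P (fun ω => -(X i ω)) B₁ᶜ := fun i => tail_compl_neg (tB₁ i)
  have tArc : ∀ i, IsTailEvent P (fun ω => -(X i ω)) Arᶜ := fun i => tail_compl_neg (tAr i)
  have hcompl1 : P B₁ᶜ = 1 - e := by
    rw [prob_compl_eq_one_sub hB₁m, hB₁e]
  have hcompl2 : (1 : ENNReal) - e ≤ P Arᶜ := by
    rw [prob_compl_eq_one_sub hArm]
    exact tsub_le_tsub_left her 1
  obtain ⟨B₂, hB₂m, tB₂, hB₂e, hB₂l, hB₂r⟩ :=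
    tail_shrink (X := fun i ω => -(X i ω)) hP hB₁m.compl hArm.compl tB₁c tArc hcompl1 hcompl2
  refine ⟨B₂ᶜ, hB₂m.compl, ?_, ?_, ?_, ?_⟩
  · intro i
    have := tail_compl_neg (tB₂ i)
    simpa using this
  · rw [prob_compl_eq_one_sub hB₂m, hB₂e, ENNReal.sub_sub_cancel ENNReal.one_ne_top he_le_one]
  · intro ω hω
    intro hB₂
    exact (hB₂r hB₂) hω
  · intro ω hω
    by_contra hωAl
    have : ω ∈ B₁ᶜ ∩ Arᶜ := ⟨fun h => hωAl (hB₁r h), fun h => hωAl (hsub h)⟩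
    exact hω (hB₂l this)

end Helpers2
section Helpers3

open MeasureTheory Filter Set

set_option linter.unusedSectionVars false
set_option maxHeartbeats 1000000

variable {Ω : Type*} [MeasurableSpace Ω] {P : MeasureTheory.Measure Ω}
  [MeasureTheory.IsProbabilityMeasure P] {d : ℕ} {X : Fin d → Ω → ℝ}

/-- A good event at level `q`: measurable tail event of probability `1 - q`. -/
def GoodEvent (P : MeasureTheory.Measure Ω) (X : Fin d → Ω → ℝ) (q : ℝ) (A : Set Ω) : Prop :=
  MeasurableSet A ∧ P A = ENNReal.ofReal (1 - q) ∧ ∀ i, IsTailEvent P (X i) A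

private def seqRec {β : ℕ → Sort*} (z : β 0) (s : ∀ n, β n → β (n+1)) : ∀ n, β n
  | 0 => z
  | n+1 => s n (seqRec z s n)

lemma exists_nested (hP : Atomless P) (p : ℕ → ℝ) (hp : ∀ n, p n ∈ Ioo (0:ℝ) 1)
    (hcon : ∀ n, ∃ A, GoodEvent P X (p n) A) :
    ∃ A : ℕ → Set Ω, (∀ n, GoodEvent P X (p n) (A n)) ∧
      ∀ m n, p m ≤ p n → A n ⊆ A m := by
  classical
  -- invariant on finite prefixes
  set Inv : ∀ n : ℕ, (Fin n → Set Ω) → Prop :=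
    fun n f => (∀ m : Fin n, GoodEvent P X (p m.val) (f m)) ∧
      ∀ m m' : Fin n, p m.val ≤ p m'.val → f m' ⊆ f m with hInv
  have step : ∀ n (f : Fin n → Set Ω), Inv n f → ∃ s, Inv (n+1) (Fin.snoc f s) := by
    intro n f ⟨hgood, hnest⟩
    by_cases hdup : ∃ m : Fin n, p m.val = p n
    · obtain ⟨m, hm⟩ := hdup
      refine ⟨f m, ?_, ?_⟩
      · intro m'
        refine Fin.lastCases ?_ (fun k => ?_) m'
        · simpa [Fin.snoc_last, ← hm] using hgood m
        · simpa [Fin.snoc_castSucc] using hgood k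
      · intro m' m'' hle
        rcases Fin.eq_castSucc_or_eq_last m'' with ⟨k, rfl⟩ | rfl <;>
          rcases Fin.eq_castSucc_or_eq_last m' with ⟨k', rfl⟩ | rfl
        · simp only [Fin.snoc_castSucc]
          exact hnest k' k (by simpa using hle)
        · simp only [Fin.snoc_last, Fin.snoc_castSucc]
          refine hnest m k ?_
          rw [hm]
          simpa using hle
        · simp only [Fin.snoc_last, Fin.snoc_castSucc]
          refine hnest k' m ?_
          rw [hm]
          simpa using hle
        · simp
    · push_neg at hdup
      -- the lower neighbour
      have hAl : ∃ Al, MeasurableSet Al ∧ (∀ i, IsTailEvent P (X i) Al) ∧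
          ENNReal.ofReal (1 - p n) ≤ P Al ∧ (∀ m : Fin n, p m.val < p n → Al ⊆ f m) ∧
          (Al = univ ∨ ∃ b : Fin n, Al = f b ∧ p b.val < p n) := by
        set S : Finset (Fin n) := Finset.univ.filter (fun m => p m.val < p n) with hS
        by_cases hSne : S.Nonempty
        · obtain ⟨b, hbS, hbmax⟩ := S.exists_max_image (fun m => p m.val) hSne
          have hbp : p b.val < p n := by simpa [hS] using hbS
          obtain ⟨hbm, hbe, hbt⟩ := hgood b
          refine ⟨f b, hbm, hbt, ?_, ?_, Or.inr ⟨b, rfl, hbp⟩⟩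
          · rw [hbe]
            exact ENNReal.ofReal_le_ofReal (by linarith)
          · intro m hm
            refine hnest m b (hbmax m ?_)
            simpa [hS] using hm
        · refine ⟨univ, MeasurableSet.univ, fun i => tail_univ _, ?_, ?_, Or.inl rfl⟩
          · rw [measure_univ]
            exact ENNReal.ofReal_le_one.2 (by have := (hp n).1; linarith)
          · intro m hm
            exact absurd (⟨m, by simpa [hS] using hm⟩ : S.Nonempty) hSne
      obtain ⟨Al, hAlm, tAl, hAle, hAlsub, hAlcase⟩ := hAl
      -- the upper neighbour
      have hAr : ∃ Ar, MeasurableSet Ar ∧ (∀ i, IsTailEvent P (X i) Ar) ∧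
          P Ar ≤ ENNReal.ofReal (1 - p n) ∧ (∀ m : Fin n, p n < p m.val → f m ⊆ Ar) ∧
          (Ar = (∅ : Set Ω) ∨ ∃ c : Fin n, Ar = f c ∧ p n < p c.val) := by
        set T : Finset (Fin n) := Finset.univ.filter (fun m => p n < p m.val) with hT
        by_cases hTne : T.Nonempty
        · obtain ⟨c, hcT, hcmin⟩ := T.exists_min_image (fun m => p m.val) hTne
          have hcp : p n < p c.val := by simpa [hT] using hcT
          obtain ⟨hcm, hce, hct⟩ := hgood c
          refine ⟨f c, hcm, hct, ?_, ?_, Or.inr ⟨c, rfl, hcp⟩⟩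
          · rw [hce]
            exact ENNReal.ofReal_le_ofReal (by linarith)
          · intro m hm
            refine hnest c m (hcmin m ?_)
            simpa [hT] using hm
        · refine ⟨∅, MeasurableSet.empty, fun i => tail_empty _, by simp, ?_, Or.inl rfl⟩
          intro m hm
          exact absurd (⟨m, by simpa [hT] using hm⟩ : T.Nonempty) hTne
      obtain ⟨Ar, hArm, tAr, hAre, hArsub, hArcase⟩ := hAr
      have hsub : Ar ⊆ Al := by
        rcases hArcase with rfl | ⟨c, rfl, hc⟩
        · exact empty_subset _
        · rcases hAlcase with rfl | ⟨b, rfl, hb⟩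
          · exact subset_univ _
          · exact hnest b c (le_of_lt (hb.trans hc))
      obtain ⟨A, hAm, hAe, tA⟩ := hcon n
      obtain ⟨B, hBm, tB, hBe, hBr, hBl⟩ :=
        tail_ins hP hAm hAlm hArm tA tAl tAr hsub hAe hAre hAle
      refine ⟨B, ?_, ?_⟩
      · intro m'
        refine Fin.lastCases ?_ (fun k => ?_) m'
        · simpa [Fin.snoc_last] using (show GoodEvent P X (p n) B from ⟨hBm, hBe, tB⟩)
        · simpa [Fin.snoc_castSucc] using hgood k
      · intro m' m'' hle
        rcases Fin.eq_castSucc_or_eq_last m'' with ⟨k, rfl⟩ | rfl <;>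
          rcases Fin.eq_castSucc_or_eq_last m' with ⟨k', rfl⟩ | rfl
        · simp only [Fin.snoc_castSucc]
          exact hnest k' k (by simpa using hle)
        · simp only [Fin.snoc_last, Fin.snoc_castSucc]
          have hk : p n ≤ p k.val := by simpa using hle
          have hklt : p n < p k.val := lt_of_le_of_ne hk (fun h => hdup k h.symm)
          exact (hArsub k hklt).trans hBr
        · simp only [Fin.snoc_last, Fin.snoc_castSucc]
          have hk' : p k'.val ≤ p n := by simpa using hle
          have hk'lt : p k'.val < p n := lt_of_le_of_ne hk' (hdup _)
          exact hBl.trans (hAlsub k' hk'lt)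
        · simp
  -- build the sequence by recursion
  have base : Inv 0 (Fin.elim0) := ⟨fun m => m.elim0, fun m => m.elim0⟩
  obtain ⟨g, hgs⟩ : ∃ g : ∀ n, {f : Fin n → Set Ω // Inv n f},
      ∀ n, ∀ k : Fin n, (g (n+1)).1 k.castSucc = (g n).1 k := by
    refine ⟨seqRec ⟨Fin.elim0, base⟩
      (fun n ih => ⟨Fin.snoc ih.1 (Classical.choose (step n ih.1 ih.2)),
        Classical.choose_spec (step n ih.1 ih.2)⟩), ?_⟩
    intro n k
    rw [seqRec]
    simp
  set A : ℕ → Set Ω := fun n => (g (n+1)).1 (Fin.last n) with hA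
  have hagree : ∀ n (k : ℕ) (hk : k < n), (g n).1 ⟨k, hk⟩ = A k := by
    intro n
    induction n with
    | zero => intro k hk; omega
    | succ n ih =>
      intro k hk
      rcases Nat.lt_succ_iff_lt_or_eq.1 hk with hk' | rfl
      · have e1 : (⟨k, hk⟩ : Fin (n+1)) = Fin.castSucc ⟨k, hk'⟩ := rfl
        calc (g (n+1)).1 ⟨k, hk⟩ = (g n).1 ⟨k, hk'⟩ := by
              rw [e1]; exact hgs n ⟨k, hk'⟩
          _ = A k := ih k hk'
      · rfl
  refine ⟨A, ?_, ?_⟩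
  · intro n
    have := (g (n+1)).2.1 (Fin.last n)
    simpa [hA] using this
  · intro m n hle
    set N : ℕ := max m n + 1 with hN
    have hmN : m < N := by omega
    have hnN : n < N := by omega
    have := (g N).2.2 ⟨m, hmN⟩ ⟨n, hnN⟩ hle
    rwa [hagree N m hmN, hagree N n hnN] at this

end Helpers3
section Helpers4

open MeasureTheory Filter Set

set_option linter.unusedSectionVars false
set_option maxHeartbeats 1000000

variable {Ω : Type*} [MeasurableSpace Ω] {P : MeasureTheory.Measure Ω}
  [MeasureTheory.IsProbabilityMeasure P]

lemma cdf_meas {Z : Ω → ℝ} (hZ : Measurable Z) (x : ℝ) :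
    MeasurableSet {ω | Z ω ≤ x} :=
  measurableSet_le hZ measurable_const

lemma cdf_lt_meas {Z : Ω → ℝ} (hZ : Measurable Z) (x : ℝ) :
    MeasurableSet {ω | Z ω < x} :=
  measurableSet_lt hZ measurable_const

lemma cdf_nonempty {Z : Ω → ℝ} {s : ℝ} (hs : s < 1) :
    {x : ℝ | ENNReal.ofReal s ≤ P {ω | Z ω ≤ x}}.Nonempty := by
  have hmono : Monotone (fun n : ℕ => {ω | Z ω ≤ (n : ℝ)}) := by
    intro m n hmn ω hω
    simp only [mem_setOf_eq] at hω ⊢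
    exact le_trans hω (by exact_mod_cast hmn)
  have huniv : (⋃ n : ℕ, {ω | Z ω ≤ (n : ℝ)}) = univ := by
    ext ω
    simp only [mem_iUnion, mem_setOf_eq, mem_univ, iff_true]
    obtain ⟨n, hn⟩ := exists_nat_gt (Z ω)
    exact ⟨n, hn.le⟩
  have h1 : (⨆ n : ℕ, P {ω | Z ω ≤ (n : ℝ)}) = 1 := by
    rw [← hmono.measure_iUnion, huniv, measure_univ]
  have hlt : ENNReal.ofReal s < ⨆ n : ℕ, P {ω | Z ω ≤ (n : ℝ)} := by
    rw [h1]; exact ENNReal.ofReal_lt_one.2 hs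
  obtain ⟨n, hn⟩ := lt_iSup_iff.1 hlt
  exact ⟨(n : ℝ), hn.le⟩

lemma cdf_bddBelow {Z : Ω → ℝ} (hZ : Measurable Z) {s : ℝ} (hs : 0 < s) :
    BddBelow {x : ℝ | ENNReal.ofReal s ≤ P {ω | Z ω ≤ x}} := by
  have hinter : (⋂ n : ℕ, {ω | Z ω ≤ -(n : ℝ)}) = ∅ := by
    ext ω
    simp only [mem_iInter, mem_setOf_eq, mem_empty_iff_false, iff_false, not_forall, not_le]
    obtain ⟨n, hn⟩ := exists_nat_gt (-(Z ω))
    exact ⟨n, by linarith⟩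
  have hdir : Directed (· ⊇ ·) (fun n : ℕ => {ω | Z ω ≤ -(n : ℝ)}) := by
    intro m n
    refine ⟨max m n, fun ω hω => ?_, fun ω hω => ?_⟩ <;>
      · simp only [mem_setOf_eq] at hω ⊢
        refine le_trans hω (neg_le_neg ?_)
        simp
  have h0 : (⨅ n : ℕ, P {ω | Z ω ≤ -(n : ℝ)}) = 0 := by
    rw [← Directed.measure_iInter (fun n => (cdf_meas hZ _).nullMeasurableSet) hdir
      ⟨0, measure_ne_top P _⟩, hinter, measure_empty]
  have hlt : (⨅ n : ℕ, P {ω | Z ω ≤ -(n : ℝ)}) < ENNReal.ofReal s := by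
    rw [h0]; exact ENNReal.ofReal_pos.2 hs
  obtain ⟨n, hn⟩ := iInf_lt_iff.1 hlt
  refine ⟨-(n : ℝ), fun x hx => ?_⟩
  by_contra hlt'
  push_neg at hlt'
  have : P {ω | Z ω ≤ x} ≤ P {ω | Z ω ≤ -(n:ℝ)} :=
    measure_mono (fun ω hω => le_trans hω hlt'.le)
  exact absurd (le_trans hx this) (not_le.2 hn)

lemma cdf_at_quantile {Z : Ω → ℝ} (hZ : Measurable Z) {s : ℝ} (hs0 : 0 < s) (hs1 : s < 1) :
    ENNReal.ofReal s ≤ P {ω | Z ω ≤ leftQuantile P Z s} := by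
  set c := leftQuantile P Z s with hc
  set S := {x : ℝ | ENNReal.ofReal s ≤ P {ω | Z ω ≤ x}} with hS
  have hint : {ω | Z ω ≤ c} = ⋂ n : ℕ, {ω | Z ω ≤ c + 1/(n+1)} := by
    ext ω
    simp only [mem_iInter, mem_setOf_eq]
    constructor
    · intro h n
      have : (0:ℝ) < 1/(n+1) := by positivity
      linarith
    · intro h
      refine le_of_forall_pos_le_add (fun ε hε => ?_)
      obtain ⟨n, hn⟩ := exists_nat_one_div_lt hε
      exact le_trans (h n) (by linarith)
  have hanti : Antitone (fun n : ℕ => {ω | Z ω ≤ c + 1/(n+1)}) := by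
    intro m n hmn ω hω
    simp only [mem_setOf_eq] at hω ⊢
    refine le_trans hω ?_
    have : (1:ℝ)/(n+1) ≤ 1/(m+1) := by
      apply one_div_le_one_div_of_le (by positivity)
      exact_mod_cast by omega
    linarith
  rw [hint, Directed.measure_iInter (fun n => (cdf_meas hZ _).nullMeasurableSet)
    hanti.directed_ge ⟨0, measure_ne_top P _⟩]
  refine le_iInf (fun n => ?_)
  have hcs : c < c + 1/(n+1) := by
    have : (0:ℝ) < 1/(n+1) := by positivity
    linarith
  obtain ⟨x, hxS, hxlt⟩ := (csInf_lt_iff (cdf_bddBelow hZ hs0) (cdf_nonempty hs1)).1 hcs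
  exact le_trans hxS (measure_mono (fun ω hω => le_trans hω hxlt.le))

lemma cdf_lt_quantile {Z : Ω → ℝ} (hZ : Measurable Z) {s : ℝ} (hs0 : 0 < s) (hs1 : s < 1) :
    P {ω | Z ω < leftQuantile P Z s} ≤ ENNReal.ofReal s := by
  set c := leftQuantile P Z s with hc
  have hun : {ω | Z ω < c} = ⋃ n : ℕ, {ω | Z ω ≤ c - 1/(n+1)} := by
    ext ω
    simp only [mem_iUnion, mem_setOf_eq]
    constructor
    · intro h
      obtain ⟨n, hn⟩ := exists_nat_one_div_lt (sub_pos.2 h)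
      exact ⟨n, by linarith⟩
    · intro ⟨n, hn⟩
      have : (0:ℝ) < 1/(n+1) := by positivity
      linarith
  have hmono : Monotone (fun n : ℕ => {ω | Z ω ≤ c - 1/(n+1)}) := by
    intro m n hmn ω hω
    simp only [mem_setOf_eq] at hω ⊢
    refine le_trans hω ?_
    have : (1:ℝ)/(n+1) ≤ 1/(m+1) := by
      apply one_div_le_one_div_of_le (by positivity)
      exact_mod_cast by omega
    linarith
  rw [hun, hmono.measure_iUnion]
  refine iSup_le (fun n => ?_)
  have hnotmem : (c - 1/(n+1)) ∉ {x : ℝ | ENNReal.ofReal s ≤ P {ω | Z ω ≤ x}} := by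
    intro hmem
    have := csInf_le (cdf_bddBelow hZ hs0) hmem
    have hpos : (0:ℝ) < 1/(n+1) := by positivity
    have : c ≤ c - 1/(n+1) := this
    linarith
  simpa only [mem_setOf_eq, not_le] using le_of_lt (not_le.1 hnotmem)

end Helpers4
section Helpers5

open MeasureTheory Filter Set

set_option linter.unusedSectionVars false
set_option maxHeartbeats 1000000

variable {Ω : Type*} [MeasurableSpace Ω] {P : MeasureTheory.Measure Ω}
  [MeasureTheory.IsProbabilityMeasure P]

/-- A set separating `Z`-values is a tail event for any `Y` comonotone with `Z`. -/
lemma tail_of_sep {Y Z : Ω → ℝ} (hY : Measurable Y) (hZ : Measurable Z)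
    (hco : ComonotonePair P Y Z) {A : Set Ω} (hAm : MeasurableSet A)
    (hsep : ∀ ω ∈ A, ∀ ω' ∈ Aᶜ, Z ω' < Z ω) :
    IsTailEvent P Y A := by
  classical
  have hS : (P.prod P) {w : Ω × Ω | ¬ (0 ≤ (Y w.1 - Y w.2) * (Z w.1 - Z w.2))} = 0 :=
    ae_iff.1 hco
  have key : ∀ r : ℚ, P (A ∩ {ω | Y ω < (r:ℝ)}) = 0 ∨ P (Aᶜ ∩ {ω | (r:ℝ) < Y ω}) = 0 := by
    intro r
    have hsub : (A ∩ {ω | Y ω < (r:ℝ)}) ×ˢ (Aᶜ ∩ {ω | (r:ℝ) < Y ω}) ⊆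
        {w : Ω × Ω | ¬ (0 ≤ (Y w.1 - Y w.2) * (Z w.1 - Z w.2))} := by
      rintro ⟨ω, ω'⟩ ⟨⟨hωA, hωr⟩, ⟨hω'A, hω'r⟩⟩
      simp only [mem_setOf_eq, not_le]
      have h1 : Y ω - Y ω' < 0 := by
        simp only [mem_setOf_eq] at hωr hω'r
        linarith
      have h2 : 0 < Z ω - Z ω' := sub_pos.2 (hsep ω hωA ω' hω'A)
      exact mul_neg_of_neg_of_pos h1 h2
    have := measure_mono_null hsub hS
    rw [Measure.prod_prod] at this
    exact mul_eq_zero.1 this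
  set N : Set Ω := ⋃ r : ℚ, (if P (A ∩ {ω | Y ω < (r:ℝ)}) = 0 then A ∩ {ω | Y ω < (r:ℝ)}
    else Aᶜ ∩ {ω | (r:ℝ) < Y ω}) with hN
  have hN0 : P N = 0 := by
    refine measure_iUnion_null (fun r => ?_)
    split_ifs with h
    · exact h
    · exact (key r).resolve_left h
  refine ⟨hAm, N, hN0, ?_⟩
  intro ω hω hωN ω' hω' hω'N
  by_contra hlt
  push_neg at hlt
  obtain ⟨r, hr1, hr2⟩ := exists_rat_btwn hlt
  by_cases h : P (A ∩ {ω | Y ω < (r:ℝ)}) = 0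
  · refine hωN ?_
    rw [hN]
    refine mem_iUnion.2 ⟨r, ?_⟩
    rw [if_pos h]
    exact ⟨hω, hr1⟩
  · refine hω'N ?_
    rw [hN]
    refine mem_iUnion.2 ⟨r, ?_⟩
    rw [if_neg h]
    exact ⟨hω', hr2⟩

/-- The backward direction: `𝒱(K)`-comonotonicity implies `K`-concentration. -/
lemma gcomono_to_kconc {K : Set ℝ} (hK : K ⊆ Icc 0 1)
    {d : ℕ} {X : Fin d → Ω → ℝ} (hX : ∀ i, Measurable (X i))
    (h : GComonotone P (VK K) X) : KConcentrated P X K := by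
  obtain ⟨Z, hZm, hQ, hco⟩ := h
  intro p hpK
  obtain ⟨hp0, hp1⟩ := hK hpK
  rcases eq_or_lt_of_le hp0 with rfl | hp0'
  · exact ⟨univ, fun i => ⟨tail_univ _, by simp⟩⟩
  rcases eq_or_lt_of_le hp1 with rfl | hp1'
  · exact ⟨∅, fun i => ⟨tail_empty _, by simp⟩⟩
  -- now 0 < p < 1
  set c := leftQuantile P Z p with hc
  have hQp : c = VK K p := by
    have := hQ p ⟨hp0, hp1⟩
    rwa [Q, if_neg (ne_of_gt hp0')] at this
  set L := P {ω | Z ω < c} with hL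
  set R := P {ω | Z ω ≤ c} with hR
  have hLle : L ≤ ENNReal.ofReal p := cdf_lt_quantile hZm hp0' hp1'
  have hRge : ENNReal.ofReal p ≤ R := cdf_at_quantile hZm hp0' hp1'
  have hRtop : R ≠ ⊤ := measure_ne_top P _
  have hLtop : L ≠ ⊤ := measure_ne_top P _
  -- dichotomy
  have hdich : L = ENNReal.ofReal p ∨ R = ENNReal.ofReal p := by
    by_contra hcon
    push_neg at hcon
    have hLlt : L < ENNReal.ofReal p := lt_of_le_of_ne hLle hcon.1
    have hRgt : ENNReal.ofReal p < R := lt_of_le_of_ne hRge (Ne.symm hcon.2)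
    -- right side: quantile is constant up to R.toReal
    have hs''def : p < R.toReal := by
      rwa [← ENNReal.ofReal_lt_iff_lt_toReal hp0 hRtop]
    set s'' := R.toReal with hs''
    have hs''le1 : s'' ≤ 1 := by
      have : R ≤ 1 := prob_le_one
      calc s'' = R.toReal := rfl
        _ ≤ (1 : ENNReal).toReal := ENNReal.toReal_mono ENNReal.one_ne_top this
        _ = 1 := by simp
    have hs''0 : 0 < s'' := lt_trans hp0' hs''def
    have hq'' : leftQuantile P Z s'' = c := by
      refine le_antisymm ?_ ?_
      · refine csInf_le (cdf_bddBelow hZm hs''0) ?_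
        show ENNReal.ofReal s'' ≤ P {ω | Z ω ≤ c}
        rw [hs'', ENNReal.ofReal_toReal hRtop]
      · refine le_csInf ⟨c, by rw [mem_setOf_eq, ENNReal.ofReal_toReal hRtop]⟩ ?_
        intro x hx
        refine csInf_le (cdf_bddBelow hZm hp0') ?_
        refine le_trans (ENNReal.ofReal_le_ofReal ?_) hx
        exact le_of_lt hs''def
    have hVK'' : VK K s'' = c := by
      have := hQ s'' ⟨le_of_lt hs''0, hs''le1⟩
      rw [Q, if_neg (ne_of_gt hs''0)] at this
      rw [← this, hq'']
    have hple : p ≤ c := by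
      rw [← hVK'']
      refine le_csSup ?_ ?_
      · exact (bddAbove_Ioo (a := (0:ℝ)) (b := s'')).mono inter_subset_left
      · exact ⟨⟨hp0', hs''def⟩, hpK⟩
    -- left side
    have hLt : L.toReal < p := by
      rwa [← ENNReal.lt_ofReal_iff_toReal_lt hLtop]
    set s' := (L.toReal + p)/2 with hs'
    have hs'0 : 0 < s' := by
      have := ENNReal.toReal_nonneg (a := L)
      rw [hs']; linarith
    have hs'p : s' < p := by rw [hs']; linarith
    have hs'gt : L.toReal < s' := by rw [hs']; linarith
    have hLlt' : L < ENNReal.ofReal s' := by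
      rwa [ENNReal.lt_ofReal_iff_toReal_lt hLtop]
    have hq' : leftQuantile P Z s' = c := by
      refine le_antisymm ?_ ?_
      · refine csInf_le_csInf (cdf_bddBelow hZm hs'0) (cdf_nonempty hp1') ?_
        intro x hx
        exact le_trans (ENNReal.ofReal_le_ofReal (le_of_lt hs'p)) hx
      · refine le_csInf ((cdf_nonempty (P := P) (Z := Z) hp1').mono ?_) ?_
        · intro x hx
          exact le_trans (ENNReal.ofReal_le_ofReal (le_of_lt hs'p)) hx
        · intro x hx
          by_contra hxc
          push_neg at hxc
          have hsub : {ω | Z ω ≤ x} ⊆ {ω | Z ω < c} := fun ω hω => lt_of_le_of_lt hω hxc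
          have : P {ω | Z ω ≤ x} ≤ L := measure_mono hsub
          exact absurd (le_trans hx this) (not_le.2 hLlt')
    have hVK' : VK K s' = c := by
      have := hQ s' ⟨le_of_lt hs'0, le_trans (le_of_lt hs'p) hp1⟩
      rw [Q, if_neg (ne_of_gt hs'0)] at this
      rw [← this, hq']
    have hcle : c ≤ s' := by
      rw [← hVK']
      refine Real.sSup_le ?_ (le_of_lt hs'0)
      intro x hx
      exact le_of_lt hx.1.2
    linarith
  -- construct the tail event
  rcases hdich with hcase | hcase
  · -- A = {Z ≥ c}
    refine ⟨{ω | c ≤ Z ω}, fun i => ⟨?_, ?_⟩⟩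
    · refine tail_of_sep (hX i) hZm (hco i) (measurableSet_le measurable_const hZm) ?_
      intro ω hω ω' hω'
      simp only [mem_compl_iff, mem_setOf_eq, not_le] at hω hω'
      exact lt_of_lt_of_le hω' hω
    · have heq : {ω | c ≤ Z ω} = {ω | Z ω < c}ᶜ := by
        ext ω; simp [not_lt]
      rw [heq, prob_compl_eq_one_sub (cdf_lt_meas hZm c), ← hL, hcase,
        ← ENNReal.ofReal_one, ← ENNReal.ofReal_sub _ hp0]
  · -- A = {Z > c}
    refine ⟨{ω | c < Z ω}, fun i => ⟨?_, ?_⟩⟩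
    · refine tail_of_sep (hX i) hZm (hco i) (measurableSet_lt measurable_const hZm) ?_
      intro ω hω ω' hω'
      simp only [mem_compl_iff, mem_setOf_eq, not_lt] at hω hω'
      exact lt_of_le_of_lt hω' hω
    · have heq : {ω | c < Z ω} = {ω | Z ω ≤ c}ᶜ := by
        ext ω; simp [not_le]
      rw [heq, prob_compl_eq_one_sub (cdf_meas hZm c), ← hR, hcase,
        ← ENNReal.ofReal_one, ← ENNReal.ofReal_sub _ hp0]

end Helpers5
section Helpers6

open MeasureTheory Filter Set

set_option linter.unusedSectionVars false
set_option maxHeartbeats 1000000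

variable {Ω : Type*} [MeasurableSpace Ω] {P : MeasureTheory.Measure Ω}
  [MeasureTheory.IsProbabilityMeasure P]

lemma VK_nonneg (K : Set ℝ) (s : ℝ) : 0 ≤ VK K s :=
  Real.sSup_nonneg (fun _ hx => le_of_lt hx.1.1)

lemma VK_le_self (K : Set ℝ) {s : ℝ} (hs : 0 ≤ s) : VK K s ≤ s :=
  Real.sSup_le (fun _ hx => le_of_lt hx.1.2) hs

lemma Q_const (c : ℝ) {p : ℝ} (hp0 : 0 ≤ p) (hp1 : p ≤ 1) : Q P (fun _ : Ω => c) p = c := by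
  have huniv : ∀ x : ℝ, c ≤ x → {ω : Ω | c ≤ x} = (univ : Set Ω) :=
    fun x hx => eq_univ_of_forall (fun ω => hx)
  have hempty : ∀ x : ℝ, x < c → {ω : Ω | c ≤ x} = (∅ : Set Ω) :=
    fun x hx => eq_empty_iff_forall_notMem.2 (fun ω h => absurd h (not_le.2 hx))
  rw [Q]
  split_ifs with h
  · rw [rightQuantile]
    have hset : {x : ℝ | ENNReal.ofReal 0 < P {ω : Ω | c ≤ x}} = Ici c := by
      ext x
      simp only [mem_setOf_eq, ENNReal.ofReal_zero, mem_Ici]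
      constructor
      · intro hx
        by_contra hxc
        rw [hempty x (not_le.1 hxc), measure_empty] at hx
        exact lt_irrefl _ hx
      · intro hx
        rw [huniv x hx, measure_univ]
        norm_num
    show sInf {x : ℝ | ENNReal.ofReal 0 < P {ω : Ω | c ≤ x}} = c
    rw [hset, csInf_Ici]
  · rw [leftQuantile]
    have hp0' : 0 < p := lt_of_le_of_ne hp0 (Ne.symm h)
    have hset : {x : ℝ | ENNReal.ofReal p ≤ P {ω : Ω | c ≤ x}} = Ici c := by
      ext x
      simp only [mem_setOf_eq, mem_Ici]
      constructor
      · intro hx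
        by_contra hxc
        rw [hempty x (not_le.1 hxc), measure_empty] at hx
        exact absurd (le_zero_iff.1 hx) (ENNReal.ofReal_pos.2 hp0').ne'
      · intro hx
        rw [huniv x hx, measure_univ]
        exact ENNReal.ofReal_le_one.2 hp1
    show sInf {x : ℝ | ENNReal.ofReal p ≤ P {ω : Ω | c ≤ x}} = c
    rw [hset, csInf_Ici]

lemma gcomono_of_empty {K : Set ℝ} (hKint : K ∩ Ioo 0 1 = ∅)
    {d : ℕ} (X : Fin d → Ω → ℝ) : GComonotone P (VK K) X := by
  refine ⟨fun _ => 0, measurable_const, ?_, ?_⟩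
  · intro q hq
    rw [Q_const 0 hq.1 hq.2]
    have hempty : Ioo 0 q ∩ K = ∅ := by
      ext x
      simp only [mem_inter_iff, mem_Ioo, mem_empty_iff_false, iff_false, not_and]
      rintro ⟨hx0, hxq⟩ hxK
      have : x ∈ K ∩ Ioo 0 1 := ⟨hxK, hx0, lt_of_lt_of_le hxq hq.2⟩
      rw [hKint] at this
      exact this
    rw [VK, hempty, Real.sSup_empty]
  · intro i
    refine Filter.Eventually.of_forall (fun w => ?_)
    simp

/-- The forward direction: `K`-concentration implies `𝒱(K)`-comonotonicity. -/
lemma kconc_to_gcomono (hP : Atomless P) {K : Set ℝ} (hK : K ⊆ Icc 0 1)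
    {d : ℕ} {X : Fin d → Ω → ℝ} (hX : ∀ i, Measurable (X i))
    (h : KConcentrated P X K) : GComonotone P (VK K) X := by
  classical
  by_cases hKint : K ∩ Ioo 0 1 = ∅
  · exact gcomono_of_empty hKint X
  have hDne : (K ∩ Ioo 0 1).Nonempty := nonempty_iff_ne_empty.2 hKint
  obtain ⟨D₀, hD₀sub, hD₀cnt, hD₀dense⟩ :=
    (TopologicalSpace.IsSeparable.of_separableSpace (K ∩ Ioo 0 1)).exists_countable_dense_subset
  have hD₀ne : D₀.Nonempty := by
    rcases hDne with ⟨k, hk⟩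
    have hmem := hD₀dense hk
    by_contra hemp
    rw [not_nonempty_iff_eq_empty.1 hemp, closure_empty] at hmem
    exact hmem
  obtain ⟨p, hpD₀⟩ := hD₀cnt.exists_eq_range hD₀ne
  have hpK : ∀ n, p n ∈ K ∩ Ioo 0 1 := fun n => hD₀sub (hpD₀ ▸ mem_range_self n)
  have hpIoo : ∀ n, p n ∈ Ioo (0:ℝ) 1 := fun n => (hpK n).2
  -- good events exist at every level p n
  have hcon : ∀ n, ∃ A, GoodEvent P X (p n) A := by
    intro n
    rcases isEmpty_or_nonempty (Fin d) with hd | hne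
    · obtain ⟨B, hBsub, hBm, hBe⟩ := hP univ MeasurableSet.univ (ENNReal.ofReal (1 - p n))
        (by rw [measure_univ]; exact ENNReal.ofReal_le_one.2 (by have := (hpIoo n).1; linarith))
      exact ⟨B, hBm, hBe, fun i => (IsEmpty.false i).elim⟩
    · obtain ⟨i0⟩ := hne
      obtain ⟨A, hA⟩ := h (p n) (hpK n).1
      exact ⟨A, (hA i0).1.1, (hA i0).2, fun i => (hA i).1⟩
  obtain ⟨A, hgood, hnest⟩ := exists_nested hP p hpIoo hcon
  -- define Z
  set W : Ω → ENNReal :=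
    fun ω => ⨆ n, (A n).indicator (fun _ => ENNReal.ofReal (p n)) ω with hW
  have hWmeas : Measurable W :=
    Measurable.iSup (fun n => Measurable.indicator measurable_const (hgood n).1)
  set Z : Ω → ℝ := fun ω => (W ω).toReal with hZdef
  have hZmeas : Measurable Z := hWmeas.ennreal_toReal
  have hWle1 : ∀ ω, W ω ≤ 1 := by
    intro ω
    refine iSup_le (fun n => ?_)
    by_cases hω : ω ∈ A n
    · rw [Set.indicator_of_mem hω]
      exact ENNReal.ofReal_le_one.2 (le_of_lt (hpIoo n).2)
    · rw [Set.indicator_of_notMem hω]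
      exact zero_le
  have hWtop : ∀ ω, W ω ≠ ⊤ := fun ω => ne_top_of_le_ne_top ENNReal.one_ne_top (hWle1 ω)
  have hZ0 : ∀ ω, 0 ≤ Z ω := fun ω => ENNReal.toReal_nonneg
  have hZ1 : ∀ ω, Z ω ≤ 1 := by
    intro ω
    calc Z ω = (W ω).toReal := rfl
      _ ≤ (1 : ENNReal).toReal := ENNReal.toReal_mono ENNReal.one_ne_top (hWle1 ω)
      _ = 1 := by simp
  have hWlt : ∀ (ω) (x : ℝ), 0 ≤ x → (x < Z ω ↔ ∃ n, ω ∈ A n ∧ x < p n) := by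
    intro ω x hx
    rw [show (x < Z ω) = (x < (W ω).toReal) from rfl,
      ← ENNReal.ofReal_lt_iff_lt_toReal hx (hWtop ω), lt_iSup_iff]
    constructor
    · rintro ⟨n, hn⟩
      by_cases hω : ω ∈ A n
      · rw [Set.indicator_of_mem hω] at hn
        exact ⟨n, hω, by rwa [ENNReal.ofReal_lt_ofReal_iff_of_nonneg hx] at hn⟩
      · rw [Set.indicator_of_notMem hω] at hn
        exact absurd hn (by simp)
    · rintro ⟨n, hω, hn⟩
      refine ⟨n, ?_⟩
      rw [Set.indicator_of_mem hω]
      rwa [ENNReal.ofReal_lt_ofReal_iff_of_nonneg hx]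
  -- measure of upper level sets
  have hupper : ∀ x : ℝ, 0 ≤ x → P {ω | x < Z ω} =
      ⨆ n : {n : ℕ // x < p n}, ENNReal.ofReal (1 - p n.val) := by
    intro x hx
    have hset : {ω | x < Z ω} = ⋃ n : {n : ℕ // x < p n}, A n.val := by
      ext ω
      simp only [mem_setOf_eq, mem_iUnion]
      rw [hWlt ω x hx]
      constructor
      · rintro ⟨n, hω, hn⟩; exact ⟨⟨n, hn⟩, hω⟩
      · rintro ⟨⟨n, hn⟩, hω⟩; exact ⟨n, hω, hn⟩
    have hdir : Directed (· ⊆ ·) (fun n : {n : ℕ // x < p n} => A n.val) := by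
      intro m n
      rcases le_total (p m.val) (p n.val) with hmn | hmn
      · exact ⟨m, subset_rfl, hnest m.val n.val hmn⟩
      · exact ⟨n, hnest n.val m.val hmn, subset_rfl⟩
    rw [hset, hdir.measure_iUnion]
    exact iSup_congr (fun n => (hgood n.val).2.1)
  have hupper_le : ∀ x : ℝ, 0 < x → P {ω | x < Z ω} < 1 := by
    intro x hx
    calc P {ω | x < Z ω} = ⨆ n : {n : ℕ // x < p n}, ENNReal.ofReal (1 - p n.val) :=
          hupper x hx.le
      _ ≤ ENNReal.ofReal (1 - x) :=
          iSup_le (fun n => ENNReal.ofReal_le_ofReal (by have := n.2; linarith))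
      _ < 1 := ENNReal.ofReal_lt_one.2 (by linarith)
  have hcdfc : ∀ x : ℝ, P {ω | Z ω ≤ x} = 1 - P {ω | x < Z ω} := by
    intro x
    have hcompl : {ω | Z ω ≤ x} = {ω | x < Z ω}ᶜ := by
      ext ω; simp [not_lt]
    rw [hcompl, prob_compl_eq_one_sub (measurableSet_lt measurable_const hZmeas)]
  have hmemT : ∀ s x : ℝ, 0 ≤ s → s ≤ 1 → 0 ≤ x →
      (ENNReal.ofReal s ≤ P {ω | Z ω ≤ x} ↔ ∀ n, x < p n → s ≤ p n) := by
    intro s x hs0 hs1 hx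
    rw [hcdfc x, hupper x hx]
    constructor
    · intro hle n hn
      by_contra hsn
      push_neg at hsn
      have h1 : ENNReal.ofReal (1 - p n) ≤
          ⨆ m : {m : ℕ // x < p m}, ENNReal.ofReal (1 - p m.val) :=
        le_iSup (fun m : {m : ℕ // x < p m} => ENNReal.ofReal (1 - p m.val)) ⟨n, hn⟩
      have h2 : ENNReal.ofReal s ≤ 1 - ENNReal.ofReal (1 - p n) :=
        le_trans hle (tsub_le_tsub_left h1 1)
      have h3 : (1:ENNReal) - ENNReal.ofReal (1 - p n) = ENNReal.ofReal (p n) := by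
        rw [← ENNReal.ofReal_one, ← ENNReal.ofReal_sub _ (by have := (hpIoo n).2; linarith)]
        norm_num
      rw [h3] at h2
      have := (ENNReal.ofReal_le_ofReal_iff (le_of_lt (hpIoo n).1)).1 h2
      linarith
    · intro hcond
      have h1 : (⨆ m : {m : ℕ // x < p m}, ENNReal.ofReal (1 - p m.val)) ≤
          ENNReal.ofReal (1 - s) :=
        iSup_le (fun m => ENNReal.ofReal_le_ofReal (by have := hcond m.val m.2; linarith))
      calc ENNReal.ofReal s = 1 - ENNReal.ofReal (1 - s) := by
            rw [← ENNReal.ofReal_one, ← ENNReal.ofReal_sub _ (by linarith)]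
            norm_num
        _ ≤ 1 - ⨆ m : {m : ℕ // x < p m}, ENNReal.ofReal (1 - p m.val) :=
            tsub_le_tsub_left h1 1
  have hTge1 : ∀ s x : ℝ, s ≤ 1 → 1 ≤ x → ENNReal.ofReal s ≤ P {ω | Z ω ≤ x} := by
    intro s x hs hx
    have huniv : {ω | Z ω ≤ x} = univ := eq_univ_of_forall (fun ω => le_trans (hZ1 ω) hx)
    rw [huniv, measure_univ]
    exact ENNReal.ofReal_le_one.2 hs
  have hTneg : ∀ x : ℝ, x < 0 → P {ω | Z ω ≤ x} = 0 := by
    intro x hx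
    have hempty : {ω | Z ω ≤ x} = ∅ :=
      eq_empty_iff_forall_notMem.2 (fun ω hω => absurd (le_trans (hZ0 ω) hω) (not_le.2 hx))
    rw [hempty, measure_empty]
  -- left quantile identity for s ∈ (0,1]
  have hQmain : ∀ s : ℝ, 0 < s → s ≤ 1 → leftQuantile P Z s = VK K s := by
    intro s hs0 hs1
    have hv0 : 0 ≤ VK K s := VK_nonneg K s
    have hvs : VK K s ≤ s := VK_le_self K (le_of_lt hs0)
    rw [leftQuantile]
    have hsubT : Ioi (VK K s) ⊆ {x : ℝ | ENNReal.ofReal s ≤ P {ω | Z ω ≤ x}} := by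
      intro y hy
      have hy' : VK K s < y := hy
      have hy0 : 0 ≤ y := le_trans hv0 (le_of_lt hy')
      rcases le_or_gt 1 y with h1y | h1y
      · exact hTge1 s y hs1 h1y
      · rw [mem_setOf_eq, hmemT s y (le_of_lt hs0) hs1 hy0]
        intro n hn
        by_contra hsn
        push_neg at hsn
        have hmem : p n ∈ Ioo 0 s ∩ K := ⟨⟨(hpIoo n).1, hsn⟩, (hpK n).1⟩
        have hle : p n ≤ VK K s :=
          le_csSup ((bddAbove_Ioo (a := (0:ℝ)) (b := s)).mono inter_subset_left) hmem
        linarith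
    have hlbT : ∀ x ∈ {x : ℝ | ENNReal.ofReal s ≤ P {ω | Z ω ≤ x}}, VK K s ≤ x := by
      intro x hxT
      rw [mem_setOf_eq] at hxT
      rcases lt_or_ge x 0 with hx0 | hx0
      · rw [hTneg x hx0] at hxT
        exact absurd (le_zero_iff.1 hxT) (ENNReal.ofReal_pos.2 hs0).ne'
      rcases le_or_gt 1 x with h1x | h1x
      · linarith
      by_contra hvx
      push_neg at hvx
      have hvne : (Ioo 0 s ∩ K).Nonempty := by
        by_contra hemp
        have hv0' : VK K s = 0 := by
          rw [VK, not_nonempty_iff_eq_empty.1 hemp, Real.sSup_empty]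
        rw [hv0'] at hvx
        linarith
      obtain ⟨k, hk, hxk⟩ := exists_lt_of_lt_csSup hvne hvx
      have hkD : k ∈ K ∩ Ioo 0 1 := ⟨hk.2, hk.1.1, lt_of_lt_of_le hk.1.2 hs1⟩
      have hkcl : k ∈ closure D₀ := hD₀dense hkD
      have hε : 0 < min (k - x) (s - k) := lt_min (by linarith) (by have := hk.1.2; linarith)
      obtain ⟨b, hbD₀, hdist⟩ := Metric.mem_closure_iff.1 hkcl _ hε
      rw [hpD₀] at hbD₀
      obtain ⟨n, rfl⟩ := hbD₀
      rw [Real.dist_eq] at hdist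
      have habs := abs_lt.1 hdist
      have h1 : x < p n := by
        have := lt_min_iff.1 hdist
        have h1' : k - p n < k - x := lt_of_le_of_lt (le_abs_self _) this.1
        linarith
      have h2 : p n < s := by
        have hmin : min (k - x) (s - k) ≤ s - k := min_le_right _ _
        have h2' : -(min (k - x) (s - k)) < k - p n := habs.1
        linarith
      have := (hmemT s x (le_of_lt hs0) hs1 hx0).1 hxT n h1
      linarith
    refine le_antisymm ?_ ?_
    · calc sInf {x : ℝ | ENNReal.ofReal s ≤ P {ω | Z ω ≤ x}} ≤ sInf (Ioi (VK K s)) :=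
            csInf_le_csInf ⟨VK K s, fun x hx => hlbT x hx⟩ nonempty_Ioi hsubT
        _ = VK K s := csInf_Ioi
    · exact le_csInf ⟨VK K s + 1, hsubT (by simp)⟩ hlbT
  -- right quantile at 0
  have hQ0 : rightQuantile P Z 0 = 0 := by
    rw [rightQuantile]
    have hsub : Ioi (0:ℝ) ⊆ {x : ℝ | ENNReal.ofReal 0 < P {ω | Z ω ≤ x}} := by
      intro x hx
      rw [mem_setOf_eq, ENNReal.ofReal_zero]
      rcases le_or_gt 1 x with h1x | h1x
      · exact lt_of_lt_of_le (by norm_num) (hTge1 1 x le_rfl h1x)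
      · rw [hcdfc x]
        exact tsub_pos_of_lt (hupper_le x hx)
    have hlb : ∀ x ∈ {x : ℝ | ENNReal.ofReal 0 < P {ω | Z ω ≤ x}}, (0:ℝ) ≤ x := by
      intro x hx
      rw [mem_setOf_eq] at hx
      by_contra hx0
      push_neg at hx0
      rw [hTneg x hx0] at hx
      simp at hx
    refine le_antisymm ?_ (le_csInf ⟨1, hsub (by norm_num)⟩ hlb)
    calc sInf {x : ℝ | ENNReal.ofReal 0 < P {ω | Z ω ≤ x}} ≤ sInf (Ioi (0:ℝ)) :=
          csInf_le_csInf ⟨0, hlb⟩ nonempty_Ioi hsub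
      _ = 0 := csInf_Ioi
  -- comonotonicity
  have hcomono : ∀ i, ComonotonePair P (X i) Z := by
    intro i
    choose Nn hNn0 hNnT using fun n => ((hgood n).2.2 i).2
    have hN0 : P (⋃ n, Nn n) = 0 := measure_iUnion_null hNn0
    have haux : ∀ ω, ω ∉ (⋃ n, Nn n) → ∀ ω', ω' ∉ (⋃ n, Nn n) →
        Z ω' < Z ω → X i ω' ≤ X i ω := by
      intro ω hω ω' hω' hlt
      have hWlt' : W ω' < W ω := (ENNReal.toReal_lt_toReal (hWtop ω') (hWtop ω)).1 hlt
      obtain ⟨n, hn⟩ := lt_iSup_iff.1 hWlt'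
      by_cases hωA : ω ∈ A n
      · rw [Set.indicator_of_mem hωA] at hn
        have hω'A : ω' ∉ A n := by
          intro hmem
          have hle : (A n).indicator (fun _ => ENNReal.ofReal (p n)) ω' ≤ W ω' :=
            le_iSup (fun m => (A m).indicator (fun _ => ENNReal.ofReal (p m)) ω') n
          rw [Set.indicator_of_mem hmem] at hle
          exact absurd (lt_of_le_of_lt hle hn) (lt_irrefl _)
        exact hNnT n ω hωA (fun hc => hω (mem_iUnion.2 ⟨n, hc⟩)) ω' hω'A
          (fun hc => hω' (mem_iUnion.2 ⟨n, hc⟩))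
      · rw [Set.indicator_of_notMem hωA] at hn
        exact absurd hn (by simp)
    have hgoodpair : ∀ ω, ω ∉ (⋃ n, Nn n) → ∀ ω', ω' ∉ (⋃ n, Nn n) →
        0 ≤ (X i ω - X i ω') * (Z ω - Z ω') := by
      intro ω hω ω' hω'
      rcases lt_trichotomy (Z ω') (Z ω) with hlt | heq | hgt
      · have := haux ω hω ω' hω' hlt
        exact mul_nonneg (by linarith) (by linarith)
      · rw [heq]
        simp
      · have := haux ω' hω' ω hω hgt
        nlinarith
    rw [ComonotonePair, ae_iff]
    have hM0 : P (toMeasurable P (⋃ n, Nn n)) = 0 := by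
      rw [measure_toMeasurable]
      exact hN0
    refine measure_mono_null (t := ((toMeasurable P (⋃ n, Nn n)) ×ˢ univ) ∪
      (univ ×ˢ (toMeasurable P (⋃ n, Nn n)))) ?_ ?_
    · intro w hw
      rw [mem_setOf_eq] at hw
      by_contra hcon
      simp only [mem_union, mem_prod, mem_univ, and_true, true_and, not_or] at hcon
      have h1 : w.1 ∉ (⋃ n, Nn n) := fun hc => hcon.1 (subset_toMeasurable P _ hc)
      have h2 : w.2 ∉ (⋃ n, Nn n) := fun hc => hcon.2 (subset_toMeasurable P _ hc)
      exact hw (hgoodpair w.1 h1 w.2 h2)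
    · refine measure_union_null ?_ ?_
      · rw [Measure.prod_prod, hM0, zero_mul]
      · rw [Measure.prod_prod, hM0, mul_zero]
  -- assemble
  refine ⟨Z, hZmeas, ?_, hcomono⟩
  intro q hq
  rw [Q]
  split_ifs with h0
  · subst h0
    rw [hQ0, VK, Set.Ioo_self, Set.empty_inter, Real.sSup_empty]
  · exact hQmain q (lt_of_le_of_ne hq.1 (Ne.symm h0)) hq.2

end Helpers6
/-- For closed `K ⊆ [0,1]`, a random vector is `K`-concentrated iff it
is `𝒱(K)`-comonotonic. -/
theorem stmt_14 {Ω : Type*} [MeasurableSpace Ω] (P : MeasureTheory.Measure Ω)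
    [MeasureTheory.IsProbabilityMeasure P] (hP : Atomless P)
    (K : Set ℝ) (hKc : IsClosed K) (hK : K ⊆ Icc 0 1)
    {d : ℕ} (X : Fin d → Ω → ℝ) (hX : ∀ i, Measurable (X i)) :
    KConcentrated P X K ↔ GComonotone P (VK K) X := by
  exact ⟨fun hKC => kconc_to_gcomono hP hK hX hKC, fun hG => gcomono_to_kconc hK hX hG⟩
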